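/- Let (F, σ) be a difference field with constant field K = {c ∈ F : σ(c) = c}, let a₀, a₁ ∈ F with a₀·a₁ ≠ 0, and let f₁, …, fₙ ∈ F. Then the K-vector space V = {(c₁, …, cₙ, q) ∈ Kⁿ × F : a₁·σ(q) + a₀·q = c₁·f₁ + ⋯ + cₙ·fₙ} has dimension at most n + 1. -/

import Mathlib

set_option synthInstance.maxHeartbeats 1000000
set_option maxHeartbeats 1000000

section Abstract

universe u

/-- Abstract linear algebra: if a vector space admits a linear map to `Kⁿ` whose
kernel is spanned by a single vector, then any `n + 2` vectors are dependent. -/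
lemma exists_dep_of_proj {K V : Type u} [Field K] [AddCommGroup V] [Module K V]
    (n : ℕ) (π : V →ₗ[K] (Fin n → K))
    (hker : ∃ v₀ : LinearMap.ker π, ∀ v : LinearMap.ker π, ∃ r : K, r • v₀ = v)
    (w : Fin (n + 2) → V) :
    ∃ g : Fin (n + 2) → K, ∑ j, g j • w j = 0 ∧ ∃ j, g j ≠ 0 := by
  rw [← Fintype.not_linearIndependent_iff]
  intro hli
  have hker' : Module.rank K (LinearMap.ker π) ≤ 1 := rank_le_one_iff.mpr hker
  have hrange : Module.rank K (LinearMap.range π) ≤ n :=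
    le_trans (Submodule.rank_le _) (by rw [rank_fun']; simp)
  have hV : Module.rank K V ≤ (n : Cardinal) + 1 := by
    rw [← π.rank_range_add_rank_ker]
    exact add_le_add hrange hker'
  have h1 := hli.cardinal_lift_le_rank
  rw [Cardinal.mk_fin, Cardinal.lift_natCast] at h1
  have h2 := le_trans h1 (Cardinal.lift_le.mpr hV)
  rw [Cardinal.lift_add, Cardinal.lift_natCast, Cardinal.lift_one] at h2
  have h3 : ((n + 2 : ℕ) : Cardinal) ≤ ((n + 1 : ℕ) : Cardinal) := by
    push_cast at h2 ⊢
    exact h2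
  rw [Nat.cast_le] at h3
  omega

end Abstract

section Aux

variable {F : Type*} [Field F] (σ : F ≃+* F)

/-- The constant subfield of a difference field. -/
def constK : Subfield F where
  carrier := {x | σ x = x}
  mul_mem' hx hy := by simp_all [Set.mem_setOf_eq]
  one_mem' := by simp [Set.mem_setOf_eq]
  add_mem' hx hy := by simp_all [Set.mem_setOf_eq]
  zero_mem' := by simp [Set.mem_setOf_eq]
  neg_mem' hx := by simp_all [Set.mem_setOf_eq]
  inv_mem' x hx := by simp_all [Set.mem_setOf_eq, map_inv₀]

lemma constK_smul (k : constK σ) (x : F) : k • x = (k : F) * x := rfl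

variable (n : ℕ) (a₀ a₁ : F) (f : Fin n → F)

/-- The solution space of the FPLDE as a submodule of Kⁿ × F. -/
def solS : Submodule (constK σ) ((Fin n → constK σ) × F) where
  carrier := {p | a₁ * σ p.2 + a₀ * p.2 = ∑ i, (p.1 i : F) * f i}
  add_mem' := by
    rintro ⟨c, q⟩ ⟨c', q'⟩ h h'
    simp only [Set.mem_setOf_eq, Prod.fst_add, Prod.snd_add, map_add, Pi.add_apply,
      Subfield.coe_add, add_mul] at *
    rw [Finset.sum_add_distrib, ← h, ← h']; ring
  zero_mem' := by simp
  smul_mem' := by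
    rintro k ⟨c, q⟩ h
    simp only [Set.mem_setOf_eq, Prod.smul_fst, Prod.smul_snd, Pi.smul_apply,
      smul_eq_mul] at *
    rw [constK_smul, map_mul, show σ (k : F) = (k : F) from k.2]
    have hsum : ∑ x, ((k * c x : constK σ) : F) * f x
        = (k : F) * ∑ x, ((c x : constK σ) : F) * f x := by
      rw [Finset.mul_sum]
      exact Finset.sum_congr rfl fun x _ => by push_cast; ring
    rw [hsum, ← h]; ring

lemma mem_solS {p : (Fin n → constK σ) × F} :
    p ∈ solS σ n a₀ a₁ f ↔ a₁ * σ p.2 + a₀ * p.2 = ∑ i, (p.1 i : F) * f i := Iff.rfl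

end Aux

set_option maxHeartbeats 2000000 in
/-- the FPLDE solution space has dimension at most n+1 over the
constant field, expressed as: any n+2 solutions are linearly dependent over
the constants. -/
theorem stmt_1 {F : Type*} [Field F] (σ : F ≃+* F) (n : ℕ)
    (a₀ a₁ : F) (ha : a₀ * a₁ ≠ 0) (f : Fin n → F)
    (v : Fin (n + 2) → (Fin n → F) × F)
    (hv : ∀ j, (∀ i, σ ((v j).1 i) = (v j).1 i) ∧
      a₁ * σ ((v j).2) + a₀ * (v j).2 = ∑ i, (v j).1 i * f i) :
    ∃ d : Fin (n + 2) → F, (∀ j, σ (d j) = d j) ∧ (∃ j, d j ≠ 0) ∧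
      (∀ i, ∑ j, d j * (v j).1 i = 0) ∧ ∑ j, d j * (v j).2 = 0 := by
  have ha₀ : a₀ ≠ 0 := fun h => ha (by simp [h])
  have ha₁ : a₁ ≠ 0 := fun h => ha (by simp [h])
  set K := constK σ with hK
  set S := solS σ n a₀ a₁ f with hSdef
  -- the projection to the coefficient part
  let π : S →ₗ[K] (Fin n → K) := (LinearMap.fst K (Fin n → K) F).comp S.subtype
  have hπ : ∀ u : S, π u = (u : (Fin n → K) × F).1 := fun u => rfl
  have hfst : ∀ u : LinearMap.ker π, ((u : S) : (Fin n → K) × F).1 = 0 := by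
    intro u
    have := u.2
    rwa [LinearMap.mem_ker, hπ] at this
  -- kernel elements are homogeneous solutions
  have hhom : ∀ u : LinearMap.ker π,
      a₁ * σ (((u : S) : (Fin n → K) × F).2) + a₀ * ((u : S) : (Fin n → K) × F).2 = 0 := by
    intro u
    have h2 := (mem_solS σ n a₀ a₁ f).mp (u : S).2
    rw [hfst u] at h2
    simpa using h2
  -- the kernel is spanned by one vector
  have hker : ∃ v₀ : LinearMap.ker π, ∀ u : LinearMap.ker π, ∃ r : K, r • v₀ = u := by
    have hσ : ∀ x : F, a₁ * σ x + a₀ * x = 0 → σ x = -(a₀ / a₁) * x := by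
      intro x hx
      field_simp
      linear_combination hx
    by_cases hex : ∃ u : LinearMap.ker π, ((u : S) : (Fin n → K) × F).2 ≠ 0
    · obtain ⟨w₀, hw₀⟩ := hex
      refine ⟨w₀, fun u => ?_⟩
      set q₀ : F := ((w₀ : S) : (Fin n → K) × F).2 with hq₀
      set q : F := ((u : S) : (Fin n → K) × F).2 with hq
      have hr : σ (q / q₀) = q / q₀ := by
        rw [div_eq_mul_inv, map_mul, map_inv₀, hσ q (hhom u), hσ q₀ (hhom w₀)]
        field_simp
      refine ⟨⟨q / q₀, hr⟩, ?_⟩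
      apply Subtype.ext; apply Subtype.ext
      have hcoe : ((((⟨q / q₀, hr⟩ : K) • w₀ : LinearMap.ker π) : S) : (Fin n → K) × F)
          = (⟨q / q₀, hr⟩ : K) • ((w₀ : S) : (Fin n → K) × F) := rfl
      rw [hcoe]
      apply Prod.ext
      · rw [Prod.smul_fst, hfst w₀, hfst u, smul_zero]
      · rw [Prod.smul_snd]
        show (q / q₀) * q₀ = q
        field_simp
    · push_neg at hex
      refine ⟨0, fun u => ⟨0, ?_⟩⟩
      apply Subtype.ext; apply Subtype.ext
      simp only [zero_smul]
      have h0 : ((u : S) : (Fin n → K) × F) = 0 := Prod.ext_iff.mpr ⟨hfst u, hex u⟩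
      simpa using h0.symm
  -- package the given solutions as elements of S
  have hwmem : ∀ j, ((fun i => (⟨(v j).1 i, (hv j).1 i⟩ : K)), (v j).2) ∈ S := by
    intro j
    rw [hSdef, mem_solS]
    simpa using (hv j).2
  let w : Fin (n + 2) → S := fun j => ⟨_, hwmem j⟩
  obtain ⟨g, hg, j₀, hj₀⟩ := exists_dep_of_proj n π hker w
  refine ⟨fun j => (g j : F), fun j => (g j).2, ⟨j₀, by simpa using hj₀⟩, ?_, ?_⟩
  · intro i
    have h5 : ((∑ j, g j • w j : S) : (Fin n → K) × F).1 i = 0 := by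
      rw [hg]; rfl
    have h6 : (∑ j, (g j * ⟨(v j).1 i, (hv j).1 i⟩ : K)) = 0 := by
      rw [← h5]
      rw [show ((∑ j, g j • w j : S) : (Fin n → K) × F)
        = ∑ j, ((g j • w j : S) : (Fin n → K) × F) from
          map_sum (S.subtype) _ _]
      simp [Prod.fst_sum]
      rfl
    have h7 := congrArg (K.subtype) h6
    rw [map_sum, map_zero] at h7
    simpa using h7
  · have h5 : ((∑ j, g j • w j : S) : (Fin n → K) × F).2 = 0 := by
      rw [hg]; rfl
    rw [show ((∑ j, g j • w j : S) : (Fin n → K) × F)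
      = ∑ j, ((g j • w j : S) : (Fin n → K) × F) from
        map_sum (S.subtype) _ _] at h5
    rw [Prod.snd_sum] at h5
    exact h5
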